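/- For x1 in [0,1], the function h_D(x1, 0) := 2 h_b(x1/2) - h_b(x1) satisfies h_D(x1, 0) ≥ x1. -/

import Mathlib

/-- Binary entropy function (base 2), with the convention `0 log 0 = 0`. -/
noncomputable def hb (x : ℝ) : ℝ := -(x * Real.logb 2 x) - (1 - x) * Real.logb 2 (1 - x)

/-- The function `h_D`. -/
noncomputable def hD (x1 x2 : ℝ) : ℝ := 2 * hb ((x1 + x2) / 2) - hb x1 - hb x2

lemma key (u : ℝ) (hu : 0 ≤ u) : (1 + u) * Real.log ((1 + u) / 2) ≤ u * Real.log u := by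
  have h := Real.convexOn_mul_log.2 (Set.mem_Ici.2 hu) (Set.mem_Ici.2 zero_le_one)
    (by norm_num : (0:ℝ) ≤ 1/2) (by norm_num : (0:ℝ) ≤ 1/2) (by norm_num)
  simp only [smul_eq_mul, Real.log_one, mul_zero, mul_one, add_zero] at h
  have e : (1/2 : ℝ) * u + 1/2 = (1 + u) / 2 := by ring
  rw [e] at h
  nlinarith [h]

theorem hD_zero_ge_self (x1 : ℝ) (hx1 : x1 ∈ Set.Icc (0:ℝ) 1) : hD x1 0 ≥ x1 := by
  obtain ⟨hx0, hx2⟩ := hx1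
  rcases eq_or_lt_of_le hx0 with h0 | h0
  · simp [hD, hb, ← h0]
  · have hl : (0:ℝ) < Real.log 2 := Real.log_pos (by norm_num)
    have hkey := key (1 - x1) (by linarith)
    have e1 : (1 + (1 - x1)) / 2 = (2 - x1) / 2 := by ring
    rw [e1, Real.log_div (by linarith) two_ne_zero] at hkey
    have el : ∀ t : ℝ, Real.logb 2 t = Real.log t / Real.log 2 := fun t => rfl
    have e2 : Real.log (x1 / 2) = Real.log x1 - Real.log 2 :=
      Real.log_div (ne_of_gt h0) two_ne_zero
    have e3 : (x1 + 0) / 2 = x1 / 2 := by ring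
    have e4 : (1 : ℝ) - x1 / 2 = (2 - x1) / 2 := by ring
    have e5 : Real.log ((2 - x1) / 2) = Real.log (2 - x1) - Real.log 2 :=
      Real.log_div (by linarith) two_ne_zero
    simp only [hD, hb, e3, e4, el, e2, e5, Real.log_one, Real.log_zero, ge_iff_le]
    rw [← sub_nonneg]
    have h6 : 1 + (1 - x1) = 2 - x1 := by ring
    rw [h6] at hkey
    have hnum : (0:ℝ) ≤ ((1 - x1) * Real.log (1 - x1)
        - (2 - x1) * (Real.log (2 - x1) - Real.log 2)) / Real.log 2 :=
      div_nonneg (by linarith) hl.le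
    refine hnum.trans (le_of_eq ?_)
    field_simp
    rw [sub_zero, Real.log_one]
    ring
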